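/- Let T > 0, let F : [0,T] × [0,π] → ℝ be continuous, and let θ : [0,π] → ℝ be continuous. Then k² ∫₀ᵀ ∫₀^π F(t,x) θ(x)² cos(kx)² e^{-2 k² t} dx dt → (1/4) ∫₀^π F(0,x) θ(x)² dx as the integer k → ∞. -/

import Mathlib

open Real Set Filter MeasureTheory intervalIntegral Topology


lemma integ_exp (a b : ℝ) (ha : 0 < a) :
    ∫ t in (0:ℝ)..b, Real.exp (-a * t) = (1 - Real.exp (-a * b)) / a := by
  have hd : ∀ t ∈ Set.uIcc (0:ℝ) b, HasDerivAt (fun t => -(Real.exp (-a * t) / a))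
      (Real.exp (-a * t)) t := by
    intro t _
    have h1 : HasDerivAt (fun t : ℝ => -a * t) (-a) t := by
      simpa using (hasDerivAt_id t).const_mul (-a)
    have h2 := (h1.exp.div_const a).neg
    refine h2.congr_deriv ?_
    rw [mul_neg, neg_div, neg_neg, mul_div_cancel_right₀ _ ha.ne']
  have hint : IntervalIntegrable (fun t => Real.exp (-a * t)) volume 0 b :=
    (Real.continuous_exp.comp (continuous_const.mul continuous_id)).intervalIntegrable 0 b
  rw [intervalIntegral.integral_eq_sub_of_hasDerivAt hd hint]
  simp
  field_simp
  ring


lemma rl (h : ℝ → ℝ) (hh : Continuous h) :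
    Tendsto (fun k : ℕ => ∫ x in (0:ℝ)..π, h x * Real.cos (2 * k * x)) atTop (𝓝 0) := by
  set f : ℝ → ℂ := (Icc (0:ℝ) π).indicator (fun x => (h x : ℂ)) with hfdef
  have hcomp : Tendsto (fun k : ℕ => -(k : ℝ) / π) atTop (cocompact ℝ) := by
    rw [cocompact_eq_atBot_atTop]
    refine Tendsto.mono_right ?_ le_sup_left
    have h1 : Tendsto (fun k : ℕ => (k : ℝ) / π) atTop atTop :=
      tendsto_natCast_atTop_atTop.atTop_div_const pi_pos
    have := tendsto_neg_atTop_atBot.comp h1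
    simpa [Function.comp_def, neg_div] using this
  have h0 := (Real.tendsto_integral_exp_smul_cocompact f).comp hcomp
  have key : ∀ k : ℕ, (∫ v : ℝ, (Real.fourierChar (-(v * (-(k : ℝ) / π))) : Circle) • f v)
      = ∫ x in (0:ℝ)..π, (h x : ℂ) * Complex.exp ((2 * (k:ℝ) * x : ℝ) * Complex.I) := by
    intro k
    have hfun : (fun v : ℝ => (Real.fourierChar (-(v * (-(k : ℝ) / π))) : Circle) • f v)
        = (Icc (0:ℝ) π).indicator
            (fun x => (h x : ℂ) * Complex.exp ((2 * (k:ℝ) * x : ℝ) * Complex.I)) := by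
      funext v
      by_cases hv : v ∈ Icc (0:ℝ) π
      · simp only [hfdef, Set.indicator_of_mem hv, Circle.smul_def, Real.fourierChar_apply]
        have harg : 2 * π * -(v * (-(k:ℝ) / π)) = 2 * (k:ℝ) * v := by
          field_simp
        rw [harg, smul_eq_mul, mul_comm]
      · simp [hfdef, Set.indicator_of_notMem hv]
    rw [hfun, MeasureTheory.integral_indicator measurableSet_Icc, integral_Icc_eq_integral_Ioc,
      ← intervalIntegral.integral_of_le pi_pos.le]
  have hJ := h0.congr key
  have hre : Tendsto (fun k : ℕ =>
      (∫ x in (0:ℝ)..π, (h x : ℂ) * Complex.exp ((2 * (k:ℝ) * x : ℝ) * Complex.I)).re)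
      atTop (𝓝 0) := by
    have := (Complex.continuous_re.tendsto 0).comp hJ
    simpa [Function.comp_def] using this
  refine hre.congr fun k => ?_
  have hii : IntervalIntegrable
      (fun x => (h x : ℂ) * Complex.exp ((2 * (k:ℝ) * x : ℝ) * Complex.I)) volume 0 π := by
    apply Continuous.intervalIntegrable
    continuity
  rw [← Complex.reCLM_apply, ← ContinuousLinearMap.intervalIntegral_comp_comm Complex.reCLM hii]
  apply intervalIntegral.integral_congr
  intro x hx
  simp only [Complex.reCLM_apply, Complex.mul_re, Complex.ofReal_re, Complex.ofReal_im,
    Complex.exp_ofReal_mul_I_re, zero_mul, sub_zero]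

set_option maxHeartbeats 1000000 in
lemma aux_main (T : ℝ) (hT : 0 < T) (F : ℝ × ℝ → ℝ) (hF : Continuous F)
    (θ : ℝ → ℝ) (hθ : Continuous θ) :
    Tendsto (fun k : ℕ => (k : ℝ) ^ 2 * ∫ t in (0:ℝ)..T, ∫ x in (0:ℝ)..π,
        F (t, x) * θ x ^ 2 * Real.cos (k * x) ^ 2 * Real.exp (-2 * (k:ℝ) ^ 2 * t))
      atTop (𝓝 ((1 / 4) * ∫ x in (0:ℝ)..π, F (0, x) * θ x ^ 2)) := by
  -- notation
  set A : ℕ → ℝ → ℝ := fun k t => ∫ x in (0:ℝ)..π, F (t, x) * θ x ^ 2 * Real.cos (k * x) ^ 2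
    with hAdef
  set c : ℕ → ℝ → ℝ := fun k t => Real.exp (-(2 * (k:ℝ) ^ 2 * t)) with hcdef
  have hccont : ∀ k : ℕ, Continuous (c k) := by
    intro k
    exact Real.continuous_exp.comp ((continuous_const.mul continuous_id).neg)
  have hFx : ∀ t : ℝ, Continuous fun x : ℝ => F (t, x) :=
    fun t => hF.comp (continuous_const.prodMk continuous_id)
  have hcos2 : ∀ k : ℕ, Continuous fun x : ℝ => Real.cos ((k:ℝ) * x) ^ 2 :=
    fun k => (Real.continuous_cos.comp (continuous_const.mul continuous_id)).pow 2
  have hIntc : ∀ (k : ℕ) (t : ℝ),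
      Continuous fun x => F (t, x) * θ x ^ 2 * Real.cos ((k:ℝ) * x) ^ 2 :=
    fun k t => ((hFx t).mul (hθ.pow 2)).mul (hcos2 k)
  have hAcont : ∀ k : ℕ, Continuous (A k) := by
    intro k
    apply continuous_parametric_intervalIntegral_of_continuous'
    have : Function.uncurry (fun t x => F (t, x) * θ x ^ 2 * Real.cos (↑k * x) ^ 2)
        = fun p : ℝ × ℝ => F p * θ p.2 ^ 2 * Real.cos (↑k * p.2) ^ 2 := by
      funext p; simp [Function.uncurry]
    rw [this]
    exact (hF.mul ((hθ.comp continuous_snd).pow 2)).mul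
      ((Real.continuous_cos.comp (continuous_const.mul continuous_snd)).pow 2)
  -- rewrite the sequence
  have hseq : ∀ k : ℕ, (k : ℝ) ^ 2 * (∫ t in (0:ℝ)..T, ∫ x in (0:ℝ)..π,
      F (t, x) * θ x ^ 2 * Real.cos (k * x) ^ 2 * Real.exp (-2 * (k:ℝ) ^ 2 * t))
      = (k : ℝ) ^ 2 * ∫ t in (0:ℝ)..T, A k t * c k t := by
    intro k
    congr 1
    apply intervalIntegral.integral_congr
    intro t _
    show (∫ x in (0:ℝ)..π, F (t, x) * θ x ^ 2 * Real.cos (k * x) ^ 2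
      * Real.exp (-2 * (k:ℝ) ^ 2 * t)) = A k t * c k t
    rw [intervalIntegral.integral_mul_const]
    simp only [hcdef, hAdef, neg_mul]
  -- decomposition
  have hsplit : ∀ k : ℕ, (∫ t in (0:ℝ)..T, A k t * c k t)
      = (∫ t in (0:ℝ)..T, (A k t - A k 0) * c k t) + A k 0 * ∫ t in (0:ℝ)..T, c k t := by
    intro k
    rw [← intervalIntegral.integral_const_mul, ← intervalIntegral.integral_add
      (f := fun t => (A k t - A k 0) * c k t) (g := fun t => A k 0 * c k t)
      (((( hAcont k).sub continuous_const).mul (hccont k)).intervalIntegrable _ _)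
      ((continuous_const.mul (hccont k)).intervalIntegrable _ _)]
    apply intervalIntegral.integral_congr
    intro t _; ring
  -- limit of the exp integral
  have hexp : Tendsto (fun k : ℕ => (k : ℝ) ^ 2 * ∫ t in (0:ℝ)..T, c k t) atTop
      (𝓝 (1 / 2)) := by
    have heq : ∀ᶠ k : ℕ in atTop, (1 - Real.exp (-(2 * (k:ℝ) ^ 2 * T))) / 2
        = (k : ℝ) ^ 2 * ∫ t in (0:ℝ)..T, c k t := by
      filter_upwards [eventually_ge_atTop 1] with k hk
      have hk0 : (0:ℝ) < (k:ℝ) ^ 2 := by positivity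
      have := integ_exp (2 * (k:ℝ) ^ 2) T (by positivity)
      simp only [neg_mul] at this
      rw [hcdef]
      simp only []
      rw [this]
      field_simp
    apply Tendsto.congr' heq
    have h1 : Tendsto (fun k : ℕ => -(2 * (k:ℝ) ^ 2 * T)) atTop atBot := by
      have h2 : Tendsto (fun k : ℕ => 2 * (k:ℝ) ^ 2 * T) atTop atTop := by
        have hk2 : Tendsto (fun k : ℕ => (k:ℝ) ^ 2) atTop atTop :=
          (tendsto_pow_atTop two_ne_zero).comp tendsto_natCast_atTop_atTop
        exact (hk2.const_mul_atTop two_pos).atTop_mul_const hT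
      exact tendsto_neg_atBot_iff.mpr h2
    have h3 : Tendsto (fun k : ℕ => Real.exp (-(2 * (k:ℝ) ^ 2 * T))) atTop (𝓝 0) :=
      Real.tendsto_exp_atBot.comp h1
    have h4 : Tendsto (fun k : ℕ => (1 - Real.exp (-(2 * (k:ℝ) ^ 2 * T))) / 2) atTop
        (𝓝 ((1 - 0) / 2)) := (Tendsto.const_sub 1 h3).div_const 2
    simpa using h4
  -- limit of A k 0
  have hDeq : ∀ k : ℕ, A k 0 = (∫ x in (0:ℝ)..π, F (0, x) * θ x ^ 2) * (1/2)
      + (∫ x in (0:ℝ)..π, (F (0, x) * θ x ^ 2) * Real.cos (2 * k * x)) * (1/2) := by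
    intro k
    have i1 : IntervalIntegrable (fun x => F (0, x) * θ x ^ 2 * (1/2)) volume 0 π :=
      ((((hFx 0).mul (hθ.pow 2)).mul continuous_const)).intervalIntegrable _ _
    have i2 : IntervalIntegrable
        (fun x => F (0, x) * θ x ^ 2 * Real.cos (2 * k * x) * (1/2)) volume 0 π := by
      apply Continuous.intervalIntegrable
      exact (((hFx 0).mul (hθ.pow 2)).mul
        (Real.continuous_cos.comp (by continuity))).mul continuous_const
    have e0 : A k 0 = ∫ x in (0:ℝ)..π,
        (F (0, x) * θ x ^ 2 * (1/2) + F (0, x) * θ x ^ 2 * Real.cos (2 * k * x) * (1/2)) := by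
      apply intervalIntegral.integral_congr
      intro x _
      show F (0, x) * θ x ^ 2 * Real.cos (k * x) ^ 2 = _
      rw [Real.cos_sq]
      have h2 : 2 * ((k:ℝ) * x) = 2 * k * x := by ring
      rw [h2]
      ring
    rw [e0, intervalIntegral.integral_add i1 i2, intervalIntegral.integral_mul_const,
      intervalIntegral.integral_mul_const]
  have hD : Tendsto (fun k : ℕ => A k 0) atTop
      (𝓝 ((∫ x in (0:ℝ)..π, F (0, x) * θ x ^ 2) * (1/2))) := by
    have hrl := rl (fun x => F (0, x) * θ x ^ 2) ((hFx 0).mul (hθ.pow 2))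
    have h1 := (tendsto_const_nhds
      (x := (∫ x in (0:ℝ)..π, F (0, x) * θ x ^ 2) * (1/2)) (f := atTop (α := ℕ))).add
      (hrl.mul_const (1/2))
    simpa using h1.congr fun k => (hDeq k).symm
  have hmain : Tendsto (fun k : ℕ => A k 0 * ((k:ℝ) ^ 2 * ∫ t in (0:ℝ)..T, c k t)) atTop
      (𝓝 (((∫ x in (0:ℝ)..π, F (0, x) * θ x ^ 2) * (1/2)) * (1/2))) := hD.mul hexp
  -- the remainder tends to zero
  have hrem : Tendsto (fun k : ℕ => (k:ℝ) ^ 2 * ∫ t in (0:ℝ)..T, (A k t - A k 0) * c k t)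
      atTop (𝓝 0) := by
    obtain ⟨M, hM⟩ := isCompact_Icc.exists_bound_of_continuousOn
      (f := fun x : ℝ => θ x ^ 2) (hθ.pow 2).continuousOn
    have hM0 : 0 ≤ M := le_trans (norm_nonneg _) (hM 0 ⟨le_refl 0, pi_pos.le⟩)
    obtain ⟨C, hC⟩ := (isCompact_Icc.prod isCompact_Icc).exists_bound_of_continuousOn
      (f := F) hF.continuousOn
    have hC0 : 0 ≤ C := le_trans (norm_nonneg _)
      (hC (0, 0) ⟨⟨le_refl 0, hT.le⟩, le_refl 0, pi_pos.le⟩)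
    have huc : UniformContinuousOn F (Icc (0:ℝ) T ×ˢ Icc (0:ℝ) π) :=
      (isCompact_Icc.prod isCompact_Icc).uniformContinuousOn_of_continuous hF.continuousOn
    -- generic bound on A k t - A k 0
    have hbound : ∀ (k : ℕ) (t B : ℝ), 0 ≤ B →
        (∀ x ∈ Icc (0:ℝ) π, |F (t, x) - F (0, x)| ≤ B) →
        |A k t - A k 0| ≤ B * M * π := by
      intro k t B hB hFb
      have hsub : A k t - A k 0
          = ∫ x in (0:ℝ)..π, (F (t, x) - F (0, x)) * θ x ^ 2 * Real.cos (k * x) ^ 2 := by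
        rw [hAdef]
        show (∫ x in (0:ℝ)..π, F (t, x) * θ x ^ 2 * Real.cos (k * x) ^ 2)
          - (∫ x in (0:ℝ)..π, F (0, x) * θ x ^ 2 * Real.cos (k * x) ^ 2) = _
        rw [← intervalIntegral.integral_sub
          ((hIntc k t).intervalIntegrable _ _) ((hIntc k 0).intervalIntegrable _ _)]
        apply intervalIntegral.integral_congr
        intro x _; ring
      rw [hsub]
      have hle := intervalIntegral.norm_integral_le_of_norm_le_const (C := B * M)
        (f := fun x => (F (t, x) - F (0, x)) * θ x ^ 2 * Real.cos (k * x) ^ 2)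
        (a := 0) (b := π) ?_
      · rw [Real.norm_eq_abs] at hle
        rw [sub_zero, abs_of_nonneg pi_pos.le] at hle
        calc |∫ x in (0:ℝ)..π, (F (t, x) - F (0, x)) * θ x ^ 2 * Real.cos (k * x) ^ 2|
            ≤ B * M * π := hle
          _ ≤ B * M * π := le_refl _
      · intro x hx
        rw [Set.uIoc_of_le pi_pos.le] at hx
        have hx' : x ∈ Icc (0:ℝ) π := Ioc_subset_Icc_self hx
        rw [Real.norm_eq_abs, abs_mul, abs_mul]
        have h1 : |F (t, x) - F (0, x)| ≤ B := hFb x hx'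
        have h2 : |θ x ^ 2| ≤ M := by have := hM x hx'; rwa [Real.norm_eq_abs] at this
        have h3 : |Real.cos ((k:ℝ) * x) ^ 2| ≤ 1 := by
          rw [abs_of_nonneg (sq_nonneg _)]; exact Real.cos_sq_le_one _
        have h5 : (0:ℝ) ≤ |θ x ^ 2| := abs_nonneg _
        have h6 : (0:ℝ) ≤ |Real.cos ((k:ℝ) * x) ^ 2| := abs_nonneg _
        calc |F (t, x) - F (0, x)| * |θ x ^ 2| * |Real.cos ((k:ℝ) * x) ^ 2|
            ≤ (B * M) * 1 :=
              mul_le_mul (mul_le_mul h1 h2 h5 hB) h3 h6 (mul_nonneg hB hM0)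
          _ = B * M := mul_one _
    -- global bound
    have hbig : ∀ t ∈ Icc (0:ℝ) T, ∀ x ∈ Icc (0:ℝ) π, |F (t, x) - F (0, x)| ≤ 2 * C := by
      intro t ht x hx
      have h1 : |F (t, x)| ≤ C := by
        have := hC (t, x) ⟨ht, hx⟩; rwa [Real.norm_eq_abs] at this
      have h2 : |F (0, x)| ≤ C := by
        have := hC (0, x) ⟨⟨le_refl 0, hT.le⟩, hx⟩; rwa [Real.norm_eq_abs] at this
      calc |F (t, x) - F (0, x)| ≤ |F (t, x)| + |F (0, x)| := abs_sub _ _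
        _ ≤ 2 * C := by linarith
    rw [Metric.tendsto_atTop]
    intro ε hε
    set ε' := ε / (2 * (M * π + 1)) with hε'def
    have hε'pos : 0 < ε' := by positivity
    obtain ⟨δ₀, hδ₀pos, hδ₀⟩ := Metric.uniformContinuousOn_iff.mp huc ε' hε'pos
    set δ := min (δ₀ / 2) T with hδdef
    have hδpos : 0 < δ := lt_min (by positivity) hT
    have hδT : δ ≤ T := min_le_right _ _
    have hsmall : ∀ t ∈ Icc (0:ℝ) δ, ∀ x ∈ Icc (0:ℝ) π, |F (t, x) - F (0, x)| ≤ ε' := by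
      intro t ht x hx
      have h1 : (t, x) ∈ Icc (0:ℝ) T ×ˢ Icc (0:ℝ) π := ⟨⟨ht.1, le_trans ht.2 hδT⟩, hx⟩
      have h2 : ((0:ℝ), x) ∈ Icc (0:ℝ) T ×ˢ Icc (0:ℝ) π := ⟨⟨le_refl 0, hT.le⟩, hx⟩
      have hd : dist (t, x) ((0:ℝ), x) < δ₀ := by
        rw [Prod.dist_eq]
        simp only [dist_self]
        rw [max_eq_left dist_nonneg, Real.dist_eq, sub_zero, abs_of_nonneg ht.1]
        calc t ≤ δ := ht.2
          _ ≤ δ₀ / 2 := min_le_left _ _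
          _ < δ₀ := by linarith
      have := hδ₀ _ h1 _ h2 hd
      rw [Real.dist_eq] at this
      exact this.le
    -- tail tendsto zero
    set Q := 2 * C * M * π * T with hQdef
    have hQ0 : 0 ≤ Q := by positivity
    set εt := ε / (2 * (Q + 1)) with hεtdef
    have hεtpos : 0 < εt := by positivity
    have hz : Tendsto (fun k : ℕ => (k:ℝ) ^ 2 * Real.exp (-(2 * (k:ℝ) ^ 2 * δ)))
        atTop (𝓝 0) := by
      have hu : Tendsto (fun k : ℕ => 2 * (k:ℝ) ^ 2 * δ) atTop atTop := by
        have hk2 : Tendsto (fun k : ℕ => (k:ℝ) ^ 2) atTop atTop :=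
          (tendsto_pow_atTop two_ne_zero).comp tendsto_natCast_atTop_atTop
        exact (hk2.const_mul_atTop two_pos).atTop_mul_const hδpos
      have h5 := (tendsto_pow_mul_exp_neg_atTop_nhds_zero 1).comp hu
      have h6 := h5.const_mul (1 / (2 * δ))
      rw [mul_zero] at h6
      apply h6.congr
      intro k
      show 1 / (2 * δ) * ((2 * (k:ℝ) ^ 2 * δ) ^ 1 * Real.exp (-(2 * (k:ℝ) ^ 2 * δ))) = _
      rw [pow_one]
      field_simp
    rw [Metric.tendsto_atTop] at hz
    obtain ⟨N₂, hN₂⟩ := hz εt hεtpos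
    refine ⟨max N₂ 1, fun k hk => ?_⟩
    have hk1 : 1 ≤ k := le_trans (le_max_right _ _) hk
    have hkN₂ : N₂ ≤ k := le_trans (le_max_left _ _) hk
    have hk1R : (1:ℝ) ≤ (k:ℝ) := by exact_mod_cast hk1
    have hkR : (0:ℝ) < (k:ℝ) ^ 2 := by positivity
    -- split the integral
    have hint1 : IntervalIntegrable (fun t => (A k t - A k 0) * c k t) volume 0 δ :=
      ((((hAcont k).sub continuous_const).mul (hccont k))).intervalIntegrable _ _
    have hint2 : IntervalIntegrable (fun t => (A k t - A k 0) * c k t) volume δ T :=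
      ((((hAcont k).sub continuous_const).mul (hccont k))).intervalIntegrable _ _
    have hIsplit : (∫ t in (0:ℝ)..T, (A k t - A k 0) * c k t)
        = (∫ t in (0:ℝ)..δ, (A k t - A k 0) * c k t)
          + ∫ t in δ..T, (A k t - A k 0) * c k t :=
      (intervalIntegral.integral_add_adjacent_intervals hint1 hint2).symm
    set I1 := ∫ t in (0:ℝ)..δ, (A k t - A k 0) * c k t with hI1def
    set I2 := ∫ t in δ..T, (A k t - A k 0) * c k t with hI2def
    -- bound I1
    have hcint : (∫ t in (0:ℝ)..δ, c k t)
        = (1 - Real.exp (-(2 * (k:ℝ) ^ 2 * δ))) / (2 * (k:ℝ) ^ 2) := by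
      have := integ_exp (2 * (k:ℝ) ^ 2) δ (by positivity)
      simp only [neg_mul] at this
      rw [hcdef]
      exact this
    have hI1 : |I1| ≤ ε' * M * π * ((1 - Real.exp (-(2 * (k:ℝ) ^ 2 * δ))) / (2 * (k:ℝ) ^ 2)) := by
      rw [← hcint, ← intervalIntegral.integral_const_mul]
      calc |I1| ≤ ∫ t in (0:ℝ)..δ, |(A k t - A k 0) * c k t| :=
          intervalIntegral.abs_integral_le_integral_abs hδpos.le
        _ ≤ ∫ t in (0:ℝ)..δ, ε' * M * π * c k t := by
            apply intervalIntegral.integral_mono_on hδpos.le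
            · exact ((((hAcont k).sub continuous_const).mul (hccont k)).abs).intervalIntegrable _ _
            · exact (continuous_const.mul (hccont k)).intervalIntegrable _ _
            · intro t ht
              rw [abs_mul, abs_of_nonneg (Real.exp_pos _).le]
              apply mul_le_mul_of_nonneg_right _ (Real.exp_pos _).le
              exact hbound k t ε' hε'pos.le (hsmall t ht)
    -- bound I2
    have hI2 : |I2| ≤ 2 * C * M * π * Real.exp (-(2 * (k:ℝ) ^ 2 * δ)) * T := by
      have hle := intervalIntegral.norm_integral_le_of_norm_le_const
        (C := 2 * C * M * π * Real.exp (-(2 * (k:ℝ) ^ 2 * δ)))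
        (f := fun t => (A k t - A k 0) * c k t) (a := δ) (b := T) ?_
      · rw [Real.norm_eq_abs] at hle
        calc |I2| ≤ 2 * C * M * π * Real.exp (-(2 * (k:ℝ) ^ 2 * δ)) * |T - δ| := hle
          _ ≤ 2 * C * M * π * Real.exp (-(2 * (k:ℝ) ^ 2 * δ)) * T := by
              apply mul_le_mul_of_nonneg_left _ (by positivity)
              rw [abs_of_nonneg (by linarith)]
              linarith
      · intro t ht
        rw [Set.uIoc_of_le hδT] at ht
        have ht' : t ∈ Icc (0:ℝ) T := ⟨le_trans hδpos.le ht.1.le, ht.2⟩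
        rw [Real.norm_eq_abs, abs_mul]
        have h1 : |A k t - A k 0| ≤ 2 * C * M * π :=
          hbound k t (2 * C) (by positivity) (hbig t ht')
        have h2 : |c k t| ≤ Real.exp (-(2 * (k:ℝ) ^ 2 * δ)) := by
          rw [hcdef, abs_of_nonneg (Real.exp_pos _).le]
          apply Real.exp_le_exp.mpr
          have : 2 * (k:ℝ) ^ 2 * δ ≤ 2 * (k:ℝ) ^ 2 * t :=
            mul_le_mul_of_nonneg_left ht.1.le (by positivity)
          linarith
        calc |A k t - A k 0| * |c k t| ≤ (2 * C * M * π) * Real.exp (-(2 * (k:ℝ) ^ 2 * δ)) :=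
            mul_le_mul h1 h2 (abs_nonneg _) (by positivity)
          _ = _ := by ring
    -- assemble
    rw [Real.dist_eq, sub_zero, hIsplit]
    have hTerm1 : (k:ℝ) ^ 2 * |I1| ≤ ε' * M * π / 2 := by
      have he0 : 0 < Real.exp (-(2 * (k:ℝ) ^ 2 * δ)) := Real.exp_pos _
      have heq : (k:ℝ) ^ 2 * (ε' * M * π * ((1 - Real.exp (-(2 * (k:ℝ) ^ 2 * δ))) / (2 * (k:ℝ) ^ 2)))
          = ε' * M * π * (1 - Real.exp (-(2 * (k:ℝ) ^ 2 * δ))) / 2 := by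
        field_simp
      have h1 : (k:ℝ) ^ 2 * |I1| ≤ ε' * M * π * (1 - Real.exp (-(2 * (k:ℝ) ^ 2 * δ))) / 2 := by
        rw [← heq]
        exact mul_le_mul_of_nonneg_left hI1 hkR.le
      have h2 : ε' * M * π * (1 - Real.exp (-(2 * (k:ℝ) ^ 2 * δ))) / 2 ≤ ε' * M * π / 2 := by
        have h3 : 0 ≤ ε' * M * π := by positivity
        nlinarith
      linarith
    have hTerm2 : (k:ℝ) ^ 2 * |I2| ≤ Q * εt := by
      have hzk := hN₂ k hkN₂
      rw [Real.dist_eq, sub_zero] at hzk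
      have hz1 : (k:ℝ) ^ 2 * Real.exp (-(2 * (k:ℝ) ^ 2 * δ)) ≤ εt := by
        have := le_abs_self ((k:ℝ) ^ 2 * Real.exp (-(2 * (k:ℝ) ^ 2 * δ)))
        linarith
      calc (k:ℝ) ^ 2 * |I2| ≤ (k:ℝ) ^ 2 * (2 * C * M * π * Real.exp (-(2 * (k:ℝ) ^ 2 * δ)) * T) :=
          mul_le_mul_of_nonneg_left hI2 hkR.le
        _ = (2 * C * M * π * T) * ((k:ℝ) ^ 2 * Real.exp (-(2 * (k:ℝ) ^ 2 * δ))) := by ring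
        _ ≤ (2 * C * M * π * T) * εt := mul_le_mul_of_nonneg_left hz1 (by positivity)
        _ = Q * εt := by rw [hQdef]
    have he1 : ε' * (M * π + 1) = ε / 2 := by
      rw [hε'def]; field_simp
    have he2 : εt * (Q + 1) = ε / 2 := by
      rw [hεtdef]; field_simp
    have habs : |(k:ℝ) ^ 2 * (I1 + I2)| ≤ (k:ℝ) ^ 2 * |I1| + (k:ℝ) ^ 2 * |I2| := by
      rw [mul_add]
      refine le_trans (abs_add_le _ _) ?_
      rw [abs_mul, abs_mul, abs_of_nonneg hkR.le]
    have q1 : ε' * M * π + ε' = ε / 2 := by linear_combination he1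
    have q2 : Q * εt + εt = ε / 2 := by linear_combination he2
    linarith [habs, hTerm1, hTerm2, q1, q2, hε'pos, hεtpos]
  -- conclusion
  have hgoal : (1/4 : ℝ) * ∫ x in (0:ℝ)..π, F (0, x) * θ x ^ 2
      = 0 + ((∫ x in (0:ℝ)..π, F (0, x) * θ x ^ 2) * (1/2)) * (1/2) := by ring
  rw [hgoal]
  exact (hrem.add hmain).congr fun k => by rw [hseq k, hsplit k]; ring

/-- Evaluation of the leading term of the second derivative: for continuous `F`
and `θ`, `k² ∬ F(t,x) θ(x)² cos(kx)² e^{-2k²t} dx dt → (1/4) ∫₀^π F(0,x) θ(x)² dx`. -/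
theorem stmt_12 (T : ℝ) (hT : 0 < T) (F : ℝ → ℝ → ℝ)
    (hF : ContinuousOn (fun p : ℝ × ℝ => F p.1 p.2) (Icc 0 T ×ˢ Icc 0 π))
    (θ : ℝ → ℝ) (hθ : ContinuousOn θ (Icc 0 π)) :
    Tendsto
      (fun k : ℕ => (k : ℝ) ^ 2 * ∫ t in (0 : ℝ)..T, ∫ x in (0 : ℝ)..π,
        F t x * θ x ^ 2 * Real.cos (k * x) ^ 2 * Real.exp (-2 * (k : ℝ) ^ 2 * t))
      atTop (nhds ((1 / 4) * ∫ x in (0 : ℝ)..π, F 0 x * θ x ^ 2)) := by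
  have hclosed : IsClosed (Icc (0:ℝ) T ×ˢ Icc (0:ℝ) π) := isClosed_Icc.prod isClosed_Icc
  obtain ⟨Fc, hFc⟩ := (ContinuousMap.mk _ hF.restrict).exists_restrict_eq hclosed
  obtain ⟨θc, hθc⟩ := (ContinuousMap.mk _ hθ.restrict).exists_restrict_eq
    (isClosed_Icc (a := (0:ℝ)) (b := π))
  have hFeq : ∀ p ∈ Icc (0:ℝ) T ×ˢ Icc (0:ℝ) π, Fc p = F p.1 p.2 := by
    intro p hp
    exact congrFun (congrArg ContinuousMap.toFun hFc) ⟨p, hp⟩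
  have hθeq : ∀ x ∈ Icc (0:ℝ) π, θc x = θ x := by
    intro x hx
    exact congrFun (congrArg ContinuousMap.toFun hθc) ⟨x, hx⟩
  have hmain := aux_main T hT Fc Fc.continuous θc θc.continuous
  have hVal : (∫ x in (0:ℝ)..π, Fc (0, x) * θc x ^ 2)
      = ∫ x in (0:ℝ)..π, F 0 x * θ x ^ 2 := by
    apply intervalIntegral.integral_congr
    intro x hx
    rw [Set.uIcc_of_le pi_pos.le] at hx
    show Fc (0, x) * θc x ^ 2 = F 0 x * θ x ^ 2
    rw [hFeq (0, x) ⟨⟨le_refl 0, hT.le⟩, hx⟩, hθeq x hx]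
  rw [hVal] at hmain
  apply hmain.congr
  intro k
  congr 1
  apply intervalIntegral.integral_congr
  intro t ht
  rw [Set.uIcc_of_le hT.le] at ht
  show (∫ x in (0:ℝ)..π, Fc (t, x) * θc x ^ 2 * Real.cos (k * x) ^ 2
      * Real.exp (-2 * (k:ℝ) ^ 2 * t))
    = ∫ x in (0:ℝ)..π, F t x * θ x ^ 2 * Real.cos (k * x) ^ 2 * Real.exp (-2 * (k:ℝ) ^ 2 * t)
  apply intervalIntegral.integral_congr
  intro x hx
  rw [Set.uIcc_of_le pi_pos.le] at hx
  show Fc (t, x) * θc x ^ 2 * Real.cos (k * x) ^ 2 * Real.exp (-2 * (k:ℝ) ^ 2 * t)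
    = F t x * θ x ^ 2 * Real.cos (k * x) ^ 2 * Real.exp (-2 * (k:ℝ) ^ 2 * t)
  rw [hFeq (t, x) ⟨ht, hx⟩, hθeq x hx]
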